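/- arXiv:2103.16351 — 3 statements merged into one kernel-verified Lean document; each statement's English description precedes it below -/
import Mathlib

section
/- If A is a symmetric positive definite N×N real matrix and the index set {1,...,N} is partitioned into blocks S_1,...,S_M, then the matrix à defined by Ã_{S_k,S_k} = A_{S_k,S_k} and Ã_{S_k,S_l} = (1/2) A_{S_k,S_l} for k ≠ l is also positive definite. -/
open Matrix

/-- The block-modified matrix: keep diagonal blocks (same group under `P`),
halve off-diagonal blocks. -/
noncomputable def blockTilde {N M : ℕ} (A : Matrix (Fin N) (Fin N) ℝ) (P : Fin N → Fin M) :
    Matrix (Fin N) (Fin N) ℝ :=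
  fun i j => if P i = P j then A i j else A i j / 2

/-- If `A` is symmetric positive definite and the indices are partitioned into groups
(via the group-assignment map `P`), then the matrix keeping diagonal blocks and halving
off-diagonal blocks is also positive definite. -/
theorem stmt0 {N M : ℕ} (A : Matrix (Fin N) (Fin N) ℝ) (P : Fin N → Fin M)
    (hA : A.IsSymm) (hApd : A.PosDef) : (blockTilde A P).PosDef := by
  rw [posDef_iff_dotProduct_mulVec]
  constructor
  · -- Hermitian
    ext i j
    have := congrFun (congrFun hA i) j
    simp only [transpose_apply] at this
    simp only [blockTilde, conjTranspose_apply, star_trivial]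
    by_cases h : P i = P j
    · rw [if_pos h, if_pos h.symm, this]
    · rw [if_neg h, if_neg (fun hh => h hh.symm), this]
  · intro x hx
    have hstar : (star x : Fin N → ℝ) = x := by simp
    rw [hstar]
    set xk : Fin M → Fin N → ℝ := fun k i => if P i = k then x i else 0 with hxk
    have key : 2 * (x ⬝ᵥ (blockTilde A P) *ᵥ x)
        = x ⬝ᵥ A *ᵥ x + ∑ k : Fin M, (xk k) ⬝ᵥ A *ᵥ (xk k) := by
      have hk : ∀ k, (xk k) ⬝ᵥ A *ᵥ (xk k)
          = ∑ i, ∑ j, if P i = k ∧ P j = k then x i * (A i j * x j) else 0 := by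
        intro k
        simp only [dotProduct, mulVec, hxk, Finset.mul_sum]
        refine Finset.sum_congr rfl fun i _ => Finset.sum_congr rfl fun j _ => ?_
        by_cases h1 : P i = k <;> by_cases h2 : P j = k <;> simp [h1, h2]
      simp only [hk]
      rw [Finset.sum_comm]
      simp only [dotProduct, mulVec, Finset.mul_sum, blockTilde]
      rw [← Finset.sum_add_distrib]
      refine Finset.sum_congr rfl fun i _ => ?_
      rw [Finset.sum_comm, ← Finset.sum_add_distrib]
      refine Finset.sum_congr rfl fun j _ => ?_
      have hsum : ∑ k : Fin M, (if P i = k ∧ P j = k then x i * (A i j * x j) else 0)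
          = if P i = P j then x i * (A i j * x j) else 0 := by
        by_cases h : P i = P j
        · rw [if_pos h]
          rw [Finset.sum_eq_single (P i)]
          · simp [h]
          · intro k _ hk'
            simp only [ite_eq_right_iff, and_imp]
            intro h1 _
            exact absurd h1.symm hk'
          · simp
        · rw [if_neg h]
          refine Finset.sum_eq_zero fun k _ => ?_
          simp only [ite_eq_right_iff, and_imp]
          intro h1 h2
          exact absurd (h1.trans h2.symm) h
      rw [hsum]
      by_cases h : P i = P j
      · simp only [if_pos h]; ring
      · simp only [if_neg h]; ring
    have h1 : 0 < x ⬝ᵥ A *ᵥ x := by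
      have := hApd.dotProduct_mulVec_pos hx
      simpa using this
    have h2 : 0 ≤ ∑ k : Fin M, (xk k) ⬝ᵥ A *ᵥ (xk k) := by
      refine Finset.sum_nonneg fun k _ => ?_
      have := hApd.posSemidef.dotProduct_mulVec_nonneg (xk k)
      simpa using this
    have : 0 < 2 * (x ⬝ᵥ (blockTilde A P) *ᵥ x) := by rw [key]; linarith
    linarith
end

section
/- Suppose y* satisfies the non-cooperative KKT conditions A_{S_k,S_k} y*_{S_k} + (1/2) Σ_{l≠k} A_{S_k,S_l} y*_{S_l} = 2 λ*_k y*_{S_k} with ‖y*_{S_k}‖² = C_k for all k. Then the social welfare W(y*) = (1/2)(y*)ᵀ A y* satisfies W(y*) ≥ Σ_{k=1}^M (2λ*_k − (1/2)ρ_k) C_k, where ρ_k is the spectral radius (largest eigenvalue) of A_{S_k,S_k}. -/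
open Matrix

/-- If `y*` satisfies the non-cooperative KKT conditions
`A_{S_k,S_k} y*_{S_k} + (1/2) Σ_{l≠k} A_{S_k,S_l} y*_{S_l} = 2 λ*_k y*_{S_k}` and
`‖y*_{S_k}‖² = C_k` for every group `k`, then the social welfare satisfies
`(1/2)(y*)ᵀ A y* ≥ Σ_k (2 λ*_k - ρ_k/2) C_k`, where `ρ_k` bounds the quadratic form of
the diagonal block `A_{S_k,S_k}` (spectral radius). -/
theorem stmt10 {N M : ℕ} (A : Matrix (Fin N) (Fin N) ℝ) (hsymm : A.IsSymm)
    (hA : A.PosDef) (P : Fin N → Fin M) (C lam rho : Fin M → ℝ)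
    (hC : ∀ k, 0 < C k) (hlam : ∀ k, 0 ≤ lam k) (ystar : Fin N → ℝ)
    (hstat : ∀ i, (∑ j ∈ Finset.univ.filter (fun j => P j = P i), A i j * ystar j) +
        (1/2) * (∑ j ∈ Finset.univ.filter (fun j => P j ≠ P i), A i j * ystar j) =
        2 * lam (P i) * ystar i)
    (hbudget : ∀ k, (∑ i ∈ Finset.univ.filter (fun i => P i = k), (ystar i)^2) = C k)
    (hrho : ∀ k, ∀ z : Fin N → ℝ, (∀ i, P i ≠ k → z i = 0) →
        z ⬝ᵥ A *ᵥ z ≤ rho k * (z ⬝ᵥ z)) :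
    (1/2) * (ystar ⬝ᵥ A *ᵥ ystar) ≥ ∑ k : Fin M, (2 * lam k - (1/2) * rho k) * C k := by
  classical
  set z : Fin M → Fin N → ℝ := fun k i => if P i = k then ystar i else 0 with hz
  set q : Fin M → ℝ := fun k => (z k) ⬝ᵥ A *ᵥ (z k) with hqdef
  -- q k as a double sum over the fiber
  have hq : ∀ k, q k
      = ∑ i ∈ Finset.univ.filter (fun i => P i = k),
          ystar i * ∑ j ∈ Finset.univ.filter (fun j => P j = k), A i j * ystar j := by
    intro k
    simp only [hqdef, dotProduct, mulVec, hz]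
    rw [Finset.sum_filter]
    refine Finset.sum_congr rfl fun i _ => ?_
    by_cases hi : P i = k
    · simp only [hi, if_true, dotProduct]
      congr 1
      rw [Finset.sum_filter]
      refine Finset.sum_congr rfl fun j _ => ?_
      by_cases hj : P j = k <;> simp [hj]
    · simp [hi]
  -- z k ⬝ z k = C k
  have hzz : ∀ k, (z k) ⬝ᵥ (z k) = C k := by
    intro k
    rw [← hbudget k]
    simp only [dotProduct, hz]
    rw [Finset.sum_filter]
    refine Finset.sum_congr rfl fun i _ => ?_
    by_cases hi : P i = k <;> simp [hi, sq]
  -- q k ≤ rho k * C k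
  have hqle : ∀ k, q k ≤ rho k * C k := by
    intro k
    have := hrho k (z k) (fun i hi => by simp [hz, hi])
    rwa [hzz k] at this
  -- main identity
  have hmain : (1/2) * (∑ k, q k) + (1/2) * (ystar ⬝ᵥ A *ᵥ ystar)
      = 2 * ∑ k, lam k * C k := by
    have hstep : ∀ i, ystar i *
          (∑ j ∈ Finset.univ.filter (fun j => P j = P i), A i j * ystar j) +
        (1/2) * (ystar i * ∑ j ∈ Finset.univ.filter (fun j => P j ≠ P i), A i j * ystar j)
        = 2 * lam (P i) * (ystar i)^2 := by
      intro i
      have := hstat i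
      linear_combination ystar i * this
    have hsumstep := Finset.sum_congr rfl (fun i (_ : i ∈ (Finset.univ : Finset (Fin N))) => hstep i)
    -- split the total sum
    have hsplit : ∀ i, (∑ j ∈ Finset.univ.filter (fun j => P j = P i), A i j * ystar j)
        + (∑ j ∈ Finset.univ.filter (fun j => P j ≠ P i), A i j * ystar j)
        = ∑ j, A i j * ystar j := by
      intro i
      exact Finset.sum_filter_add_sum_filter_not _ _ _
    -- LHS sum of fibered part equals ∑ q k
    have hfiber : ∑ i, ystar i *
          (∑ j ∈ Finset.univ.filter (fun j => P j = P i), A i j * ystar j)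
        = ∑ k, q k := by
      rw [← Finset.sum_fiberwise_of_maps_to (g := P) (t := Finset.univ)
        (fun i _ => Finset.mem_univ (P i))]
      refine Finset.sum_congr rfl fun k _ => ?_
      rw [hq k]
      refine Finset.sum_congr rfl fun i hi => ?_
      rw [Finset.mem_filter] at hi
      rw [hi.2]
    have hrhsum : ∑ i, 2 * lam (P i) * (ystar i)^2 = 2 * ∑ k, lam k * C k := by
      rw [← Finset.sum_fiberwise_of_maps_to (g := P) (t := Finset.univ)
        (fun i _ => Finset.mem_univ (P i)), Finset.mul_sum]
      refine Finset.sum_congr rfl fun k _ => ?_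
      rw [← hbudget k, Finset.mul_sum, Finset.mul_sum]
      refine Finset.sum_congr rfl fun i hi => ?_
      rw [Finset.mem_filter] at hi
      rw [hi.2]; ring
    have hyAy : ystar ⬝ᵥ A *ᵥ ystar = ∑ i, ystar i * ∑ j, A i j * ystar j := by
      simp [dotProduct, mulVec]
    have hoff : ∑ i, ystar i *
          (∑ j ∈ Finset.univ.filter (fun j => P j ≠ P i), A i j * ystar j)
        = (ystar ⬝ᵥ A *ᵥ ystar) - ∑ k, q k := by
      rw [hyAy, ← hfiber, ← Finset.sum_sub_distrib]
      refine Finset.sum_congr rfl fun i _ => ?_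
      rw [← hsplit i]; ring
    rw [Finset.sum_add_distrib] at hsumstep
    rw [hfiber] at hsumstep
    rw [← Finset.mul_sum, hoff, hrhsum] at hsumstep
    linarith [hsumstep]
  have hsum_le : ∑ k, q k ≤ ∑ k, rho k * C k :=
    Finset.sum_le_sum fun k _ => hqle k
  have hexp : ∑ k : Fin M, (2 * lam k - (1/2) * rho k) * C k
      = 2 * (∑ k, lam k * C k) - (1/2) * ∑ k, rho k * C k := by
    rw [Finset.mul_sum, Finset.mul_sum, ← Finset.sum_sub_distrib]
    exact Finset.sum_congr rfl fun k _ => by ring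
  rw [ge_iff_le, hexp]
  linarith [hmain, hsum_le]
end

section
/- Under the cooperative KKT conditions (A y)_{S_k} = 2λ̄_k ȳ_{S_k}, ‖ȳ_{S_k}‖² = C_k, and the non-cooperative KKT conditions with multipliers λ*_k as above, the L2 efficiency satisfies e_{L2} = W(y*)/W(ȳ) ≥ (Σ_k (2λ*_k − ρ_k/2) C_k) / (Σ_k λ̄_k C_k), provided W(ȳ) > 0. -/
open Matrix

/-- L2 efficiency lower bound: with `W(y) = (1/2) yᵀ A y`, if the cooperative optimum `ȳ`
satisfies its KKT conditions with multipliers `λ̄_k` and the non-cooperative equilibrium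
`y*` satisfies its KKT conditions with multipliers `λ*_k` (both spending the full budgets
`C_k`), and `W(ȳ) > 0`, then
`W(y*)/W(ȳ) ≥ (Σ_k (2λ*_k - ρ_k/2) C_k) / (Σ_k λ̄_k C_k)`. -/
theorem stmt11 {N M : ℕ} (A : Matrix (Fin N) (Fin N) ℝ) (hsymm : A.IsSymm)
    (hA : A.PosDef) (P : Fin N → Fin M) (C lamNC lamC rho : Fin M → ℝ)
    (hC : ∀ k, 0 < C k) (hlamNC : ∀ k, 0 ≤ lamNC k) (hlamC : ∀ k, 0 ≤ lamC k)
    (ystar ybar : Fin N → ℝ)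
    -- non-cooperative KKT stationarity for y*
    (hstatNC : ∀ i, (∑ j ∈ Finset.univ.filter (fun j => P j = P i), A i j * ystar j) +
        (1/2) * (∑ j ∈ Finset.univ.filter (fun j => P j ≠ P i), A i j * ystar j) =
        2 * lamNC (P i) * ystar i)
    (hbudgetNC : ∀ k, (∑ i ∈ Finset.univ.filter (fun i => P i = k), (ystar i)^2) = C k)
    -- cooperative KKT stationarity for ȳ
    (hstatC : ∀ i, (A *ᵥ ybar) i = 2 * lamC (P i) * ybar i)
    (hbudgetC : ∀ k, (∑ i ∈ Finset.univ.filter (fun i => P i = k), (ybar i)^2) = C k)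
    -- spectral radius bounds for diagonal blocks
    (hrho : ∀ k, ∀ z : Fin N → ℝ, (∀ i, P i ≠ k → z i = 0) →
        z ⬝ᵥ A *ᵥ z ≤ rho k * (z ⬝ᵥ z))
    (hWbar : 0 < (1/2) * (ybar ⬝ᵥ A *ᵥ ybar)) :
    ((1/2) * (ystar ⬝ᵥ A *ᵥ ystar)) / ((1/2) * (ybar ⬝ᵥ A *ᵥ ybar)) ≥
      (∑ k : Fin M, (2 * lamNC k - (1/2) * rho k) * C k) /
        (∑ k : Fin M, lamC k * C k) := by
  classical
  -- the block restrictions of ystar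
  set z : Fin M → Fin N → ℝ := fun k i => if P i = k then ystar i else 0 with hz
  -- Step A: denominator identity
  have hbar : ybar ⬝ᵥ A *ᵥ ybar = ∑ k, 2 * lamC k * C k := by
    have : ybar ⬝ᵥ A *ᵥ ybar = ∑ i, 2 * lamC (P i) * (ybar i)^2 := by
      rw [dotProduct]
      refine Finset.sum_congr rfl fun i _ => ?_
      rw [hstatC i]; ring
    rw [this, ← Finset.sum_fiberwise Finset.univ P (fun i => 2 * lamC (P i) * (ybar i)^2)]
    refine Finset.sum_congr rfl fun k _ => ?_
    rw [← hbudgetC k, Finset.mul_sum]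
    refine Finset.sum_congr rfl fun i hi => ?_
    simp only [Finset.mem_filter] at hi
    rw [hi.2]
  have hden : (1/2 : ℝ) * (ybar ⬝ᵥ A *ᵥ ybar) = ∑ k, lamC k * C k := by
    rw [hbar, Finset.mul_sum]
    exact Finset.sum_congr rfl fun k _ => by ring
  -- z k properties
  have hzsupp : ∀ k i, P i ≠ k → z k i = 0 := by
    intro k i h; simp [hz, h]
  have hznorm : ∀ k, z k ⬝ᵥ z k = C k := by
    intro k
    rw [dotProduct, ← hbudgetNC k, Finset.sum_filter]
    refine Finset.sum_congr rfl fun i _ => ?_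
    by_cases h : P i = k <;> simp [hz, h, sq]
  have hzquad : ∀ k, z k ⬝ᵥ A *ᵥ z k =
      ∑ i ∈ Finset.univ.filter (fun i => P i = k),
        ystar i * ∑ j ∈ Finset.univ.filter (fun j => P j = P i), A i j * ystar j := by
    intro k
    rw [dotProduct, Finset.sum_filter]
    refine Finset.sum_congr rfl fun i _ => ?_
    by_cases h : P i = k
    · simp only [hz, h, if_true, mulVec, dotProduct, Finset.sum_filter]
      congr 1
      refine Finset.sum_congr rfl fun j _ => ?_
      by_cases hj : P j = k <;> simp [hj, h]
    · simp [hz, h]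
  -- Step B: numerator identity
  have hquadsum : ∑ k, z k ⬝ᵥ A *ᵥ z k =
      ∑ i, ystar i * ∑ j ∈ Finset.univ.filter (fun j => P j = P i), A i j * ystar j := by
    rw [← Finset.sum_fiberwise Finset.univ P
      (fun i => ystar i * ∑ j ∈ Finset.univ.filter (fun j => P j = P i), A i j * ystar j)]
    exact Finset.sum_congr rfl fun k _ => hzquad k
  have hstar : ystar ⬝ᵥ A *ᵥ ystar + ∑ k, z k ⬝ᵥ A *ᵥ z k = ∑ k, 4 * lamNC k * C k := by
    have hsplit : ∀ i, (A *ᵥ ystar) i =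
        (∑ j ∈ Finset.univ.filter (fun j => P j = P i), A i j * ystar j) +
        (∑ j ∈ Finset.univ.filter (fun j => P j ≠ P i), A i j * ystar j) := by
      intro i
      rw [mulVec, dotProduct, ← Finset.sum_filter_add_sum_filter_not Finset.univ
        (fun j => P j = P i) (fun j => A i j * ystar j)]
    have key : ∀ i, ystar i * (A *ᵥ ystar) i +
        ystar i * ∑ j ∈ Finset.univ.filter (fun j => P j = P i), A i j * ystar j =
        4 * lamNC (P i) * (ystar i)^2 := by
      intro i
      have h := hstatNC i
      rw [hsplit i]
      linear_combination (2 * ystar i) * h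
    rw [hquadsum, dotProduct, ← Finset.sum_add_distrib]
    rw [show (∑ i, (ystar i * (A *ᵥ ystar) i +
        ystar i * ∑ j ∈ Finset.univ.filter (fun j => P j = P i), A i j * ystar j)) =
        ∑ i, 4 * lamNC (P i) * (ystar i)^2 from Finset.sum_congr rfl fun i _ => key i]
    rw [← Finset.sum_fiberwise Finset.univ P (fun i => 4 * lamNC (P i) * (ystar i)^2)]
    refine Finset.sum_congr rfl fun k _ => ?_
    rw [← hbudgetNC k, Finset.mul_sum]
    refine Finset.sum_congr rfl fun i hi => ?_
    simp only [Finset.mem_filter] at hi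
    rw [hi.2]
  have hT : ∑ k, z k ⬝ᵥ A *ᵥ z k ≤ ∑ k, rho k * C k := by
    refine Finset.sum_le_sum fun k _ => ?_
    have := hrho k (z k) (hzsupp k)
    rwa [hznorm k] at this
  have hnum : (∑ k : Fin M, (2 * lamNC k - (1/2) * rho k) * C k) ≤
      (1/2) * (ystar ⬝ᵥ A *ᵥ ystar) := by
    have h1 : ystar ⬝ᵥ A *ᵥ ystar = ∑ k, 4 * lamNC k * C k - ∑ k, z k ⬝ᵥ A *ᵥ z k := by
      linarith [hstar]
    rw [h1]
    have : ∑ k : Fin M, (2 * lamNC k - (1/2) * rho k) * C k =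
        (1/2) * (∑ k, 4 * lamNC k * C k - ∑ k, rho k * C k) := by
      rw [← Finset.sum_sub_distrib, Finset.mul_sum]
      exact Finset.sum_congr rfl fun k _ => by ring
    rw [this]
    linarith [hT]
  -- Conclude
  rw [ge_iff_le, hden]
  rw [hden] at hWbar
  calc (∑ k : Fin M, (2 * lamNC k - (1/2) * rho k) * C k) / (∑ k, lamC k * C k)
      ≤ ((1/2) * (ystar ⬝ᵥ A *ᵥ ystar)) / (∑ k, lamC k * C k) := by
        gcongr
    _ = _ := rfl
end
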